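/- If G is a path-forest of order n with t ≥ 1 components, then b(G) ≤ ⌊n/(2t)⌋ + t. -/

import Mathlib

open SimpleGraph

/-- The closed ball of radius `r` around `v` in the graph metric
(restricted to the connected component of `v`). -/
def SimpleGraph.nball {V : Type*} (G : SimpleGraph V) (v : V) (r : ℕ) : Set V :=
  {u | G.Reachable v u ∧ G.dist v u ≤ r}

/-- `G` can be burned in `M` rounds: its vertices can be covered by closed balls
of radii `M-1, M-2, ..., 0` around some vertices. -/
def SimpleGraph.burnsIn {V : Type*} (G : SimpleGraph V) (M : ℕ) : Prop :=
  ∃ f : Fin M → V, ∀ u : V, ∃ i : Fin M, u ∈ G.nball (f i) (M - 1 - (i : ℕ))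

/-- The burning number of `G`. -/
noncomputable def SimpleGraph.burningNumber {V : Type*} (G : SimpleGraph V) : ℕ :=
  sInf {M | G.burnsIn M}

/-- A path-forest: every connected component is a path, equivalently the graph is
acyclic and every vertex has degree at most `2`. -/
def SimpleGraph.IsPathForest {V : Type*} (G : SimpleGraph V) : Prop :=
  G.IsAcyclic ∧ ∀ v : V, Nat.card (G.neighborSet v) ≤ 2

/-- coverage of a list of path sizes by balls of radii `M-1, ..., 0`. -/
def CoversPF (M : ℕ) (s : List ℕ) (g : ℕ → ℕ × ℕ) : Prop :=
  ∀ k, k < s.length → ∀ j, j < s.getD k 0 →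
    ∃ i, i < M ∧ (g i).1 = k ∧ (g i).2 < s.getD k 0 ∧
      (g i).2 ≤ j + (M - 1 - i) ∧ j ≤ (g i).2 + (M - 1 - i)

lemma sum_set_aux : ∀ (l : List ℕ) (k : ℕ) (b : ℕ), k < l.length →
    (l.set k b).sum + l.getD k 0 = l.sum + b := by
  intro l
  induction l with
  | nil => intro k b h; simp at h
  | cons a l ih =>
    intro k b h
    cases k with
    | zero => simp [List.set]; omega
    | succ k =>
      simp only [List.set, List.sum_cons, List.getD_cons_succ]
      have := ih k b (by simpa using h)
      omega

lemma countP_set_aux : ∀ (l : List ℕ) (k : ℕ) (b : ℕ), k < l.length →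
    (l.set k b).countP (fun x => x ≠ 0) + (if l.getD k 0 ≠ 0 then 1 else 0)
      = l.countP (fun x => x ≠ 0) + (if b ≠ 0 then 1 else 0) := by
  intro l
  induction l with
  | nil => intro k b h; simp at h
  | cons a l ih =>
    intro k b h
    cases k with
    | zero =>
      simp only [List.set, List.countP_cons, List.getD_cons_zero]
      by_cases hb : b = 0 <;> by_cases ha : a = 0 <;> simp [hb, ha]
    | succ k =>
      simp only [List.set, List.countP_cons, List.getD_cons_succ]
      have := ih k b (by simpa using h)
      simp only [ne_eq, decide_not, List.getD, List.getD_eq_getElem?_getD] at this ⊢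
      by_cases h0 : (l[k]?.getD 0) = 0 <;> by_cases ha : a = 0 <;>
        by_cases hb : b = 0 <;> simp [h0, ha, hb] at this ⊢ <;> omega

lemma sum_le_countP_mul : ∀ (l : List ℕ) (a : ℕ), (∀ b ∈ l, b ≤ a) →
    l.sum ≤ l.countP (fun x => x ≠ 0) * a := by
  intro l
  induction l with
  | nil => simp
  | cons b l ih =>
    intro a h
    have hb : b ≤ a := h b (by simp)
    have := ih a (fun x hx => h x (by simp [hx]))
    simp only [ne_eq, decide_not] at this ⊢
    by_cases hb0 : b = 0 <;> simp [List.countP_cons, hb0, Nat.add_mul] <;> omega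

lemma countP_zero_sum (l : List ℕ) (h : l.countP (fun x => x ≠ 0) = 0) : l.sum = 0 := by
  rw [List.countP_eq_zero] at h
  simp only [ne_eq, decide_not, Bool.not_eq_true', decide_eq_false_iff_not, not_not] at h
  exact List.sum_eq_zero h

lemma exists_max_of_ne_nil : ∀ (l : List ℕ), l ≠ [] → ∃ a ∈ l, ∀ b ∈ l, b ≤ a := by
  intro l
  induction l with
  | nil => intro h; exact absurd rfl h
  | cons a l ih =>
    intro _
    rcases eq_or_ne l [] with rfl | hne
    · exact ⟨a, by simp, by simp⟩
    · obtain ⟨m, hm, hmax⟩ := ih hne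
      rcases le_total a m with h | h
      · exact ⟨m, by simp [hm], by
          intro b hb
          rcases List.mem_cons.mp hb with rfl | hb
          · exact h
          · exact hmax b hb⟩
      · exact ⟨a, by simp, by
          intro b hb
          rcases List.mem_cons.mp hb with rfl | hb
          · exact le_refl _
          · exact le_trans (hmax b hb) h⟩

lemma getD_set_ne' (l : List ℕ) (k k' b : ℕ) (h : k ≠ k') :
    (l.set k b).getD k' 0 = l.getD k' 0 := by
  simp [List.getD, List.getD_eq_getElem?_getD, List.getElem?_set_ne h]

lemma getD_set_self' (l : List ℕ) (k b : ℕ) (h : k < l.length) :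
    (l.set k b).getD k 0 = b := by
  simp [List.getD, List.getD_eq_getElem?_getD, List.getElem?_set_self h]

lemma lemB : ∀ (M : ℕ) (s : List ℕ),
    s.countP (fun x => x ≠ 0) ≤ M →
    s.sum ≤ 2 * s.countP (fun x => x ≠ 0) * (M - s.countP (fun x => x ≠ 0))
      + 2 * s.countP (fun x => x ≠ 0) - 1 →
    ∃ g, CoversPF M s g := by
  intro M
  induction M with
  | zero =>
    intro s h1 _
    refine ⟨fun _ => (0, 0), fun k hk j hj => absurd hj ?_⟩
    have h0 := List.countP_eq_zero.mp (Nat.le_zero.mp h1)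
    have : s.getD k 0 = 0 := by
      have := h0 _ (List.getD_eq_getElem s 0 hk ▸ s.getElem_mem hk)
      simpa using this
    omega
  | succ M ih =>
    intro s h1 h2
    set t := s.countP (fun x => x ≠ 0) with ht
    by_cases ht0 : t = 0
    · refine ⟨fun _ => (0, 0), fun k hk j hj => absurd hj ?_⟩
      have h0 := List.countP_eq_zero.mp (ht ▸ ht0)
      have : s.getD k 0 = 0 := by
        have := h0 _ (List.getD_eq_getElem s 0 hk ▸ s.getElem_mem hk)
        simpa using this
      omega
    -- t ≥ 1 : pick a maximal element
    have hsne : s ≠ [] := by rintro rfl; simp [ht] at ht0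
    obtain ⟨a, hamem, hmax⟩ := exists_max_of_ne_nil s hsne
    have hapos : a ≠ 0 := by
      obtain ⟨b, hb, hbne⟩ := List.countP_pos_iff.mp
        (by omega : 0 < s.countP (fun x => x ≠ 0))
      have := hmax b hb
      simp at hbne
      omega
    have h_as : a ≤ s.sum := List.single_le_sum (fun _ _ => Nat.zero_le _) _ hamem
    have hta : s.sum ≤ t * a := sum_le_countP_mul s a hmax
    set k := s.idxOf a with hk
    have hkl : k < s.length := List.idxOf_lt_length_iff.mpr hamem
    have hska : s.getD k 0 = a := by
      rw [List.getD_eq_getElem s 0 hkl]; exact List.getElem_idxOf hkl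
    by_cases hcase : a ≤ 2 * M + 1
    · -- one ball of radius M covers this component fully
      set s' := s.set k 0 with hs'
      have hsum' : s'.sum + a = s.sum := by
        have h := sum_set_aux s k 0 hkl
        rw [← hs', hska] at h
        omega
      have hcount' : s'.countP (fun x => x ≠ 0) + 1 = t := by
        have h := countP_set_aux s k 0 hkl
        rw [← hs', hska, if_pos hapos, if_neg (by simp)] at h
        omega
      set t' := s'.countP (fun x => x ≠ 0) with ht'
      have hrec1 : t' ≤ M := by omega
      have hrec2 : s'.sum ≤ 2 * t' * (M - t') + 2 * t' - 1 := by
        by_cases ht'0 : t' = 0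
        · have := countP_zero_sum s' (by omega)
          omega
        · -- t ≥ 2
          obtain ⟨u, hu⟩ : ∃ u, t = u + 2 := ⟨t - 2, by omega⟩
          obtain ⟨m, hm⟩ : ∃ m, M = m + (u + 1) := ⟨M - (u + 1), by omega⟩
          have h1' : s.sum - a ≤ (u + 1) * a := by
            have e : (u + 2) * a = (u + 1) * a + a := by ring
            rw [hu] at hta; omega
          have h2' : s.sum ≤ 2 * (u + 2) * m + (2 * u + 3) := by
            have e0 : M + 1 - t = m := by omega
            rw [e0, hu] at h2; omega
          have egoal : M - t' = m := by omega
          rw [egoal, (by omega : t' = u + 1)]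
          have hds : s'.sum = s.sum - a := by omega
          rw [hds]
          by_contra hcon
          push_neg at hcon
          have e2 : (u + 1) * (2 * m + 2) = 2 * (u + 1) * m + (2 * u + 2) := by ring
          have ha2 : 2 * m + 2 ≤ a := by
            refine Nat.le_of_mul_le_mul_left ?_ (Nat.succ_pos u)
            calc (u + 1) * (2 * m + 2) ≤ s.sum - a := by omega
              _ ≤ (u + 1) * a := h1'
          have e4 : (u + 2) * (2 * m + 2) = 2 * (u + 2) * m + (2 * u + 4) := by ring
          have e3 : (u + 2) * (2 * m + 2) = (u + 1) * (2 * m + 2) + (2 * m + 2) := by ring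
          omega
      obtain ⟨g0, hg0⟩ := ih s' hrec1 hrec2
      refine ⟨fun i => if i = 0 then (k, min M (a - 1)) else g0 (i - 1), ?_⟩
      intro k' hk' j hj
      by_cases hkk : k' = k
      · subst hkk
        rw [hska] at hj ⊢
        refine ⟨0, by omega, ?_, ?_, ?_, ?_⟩ <;> simp <;> omega
      · have hlen' : k' < s'.length := by rw [hs', List.length_set]; exact hk'
        have hgd : s'.getD k' 0 = s.getD k' 0 := by
          rw [hs']; exact getD_set_ne' s k k' 0 (fun h => hkk h.symm)
        obtain ⟨i, hiM, hi1, hi2, hi3, hi4⟩ := hg0 k' hlen' j (by omega)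
        refine ⟨i + 1, by omega, ?_, ?_, ?_, ?_⟩ <;>
          simp only [Nat.add_sub_cancel, if_neg (Nat.succ_ne_zero i)] <;>
          first
            | exact hi1
            | (rw [← hgd]; omega)
            | omega
    · -- a ≥ 2M+2 : chop off 2M+1 vertices with a ball of radius M
      have htM : t ≤ M := by
        rcases Nat.lt_or_ge t (M + 1) with h | h
        · omega
        · exfalso
          have he : M + 1 - t = 0 := by omega
          rw [he, Nat.mul_zero] at h2
          omega
      set s' := s.set k (a - (2 * M + 1)) with hs'
      have hsum' : s'.sum + a = s.sum + (a - (2 * M + 1)) := by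
        have h := sum_set_aux s k (a - (2 * M + 1)) hkl
        rw [← hs', hska] at h
        omega
      have hcount' : s'.countP (fun x => x ≠ 0) = t := by
        have h := countP_set_aux s k (a - (2 * M + 1)) hkl
        rw [← hs', hska, if_pos hapos, if_pos (by omega : a - (2 * M + 1) ≠ 0)] at h
        omega
      have hrec1 : s'.countP (fun x => x ≠ 0) ≤ M := by omega
      have hrec2 : s'.sum ≤ 2 * s'.countP (fun x => x ≠ 0) *
          (M - s'.countP (fun x => x ≠ 0)) + 2 * s'.countP (fun x => x ≠ 0) - 1 := by
        rw [hcount']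
        have e : 2 * t * (M + 1 - t) = 2 * t * (M - t) + 2 * t := by
          have e0 : M + 1 - t = (M - t) + 1 := by omega
          rw [e0]; ring
        rw [e] at h2
        omega
      obtain ⟨g0, hg0⟩ := ih s' hrec1 hrec2
      refine ⟨fun i => if i = 0 then (k, M) else
        (if (g0 (i - 1)).1 = k then (k, (g0 (i - 1)).2 + (2 * M + 1)) else g0 (i - 1)), ?_⟩
      intro k' hk' j hj
      have hlen' : k' < s'.length := by rw [hs', List.length_set]; exact hk'
      by_cases hkk : k' = k
      · subst hkk
        rw [hska] at hj ⊢
        by_cases hj2 : j < 2 * M + 1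
        · refine ⟨0, by omega, ?_, ?_, ?_, ?_⟩ <;> simp <;> omega
        · have hgd : s'.getD k 0 = a - (2 * M + 1) := by
            rw [hs']; exact getD_set_self' s k _ hkl
          obtain ⟨i, hiM, hi1, hi2, hi3, hi4⟩ := hg0 k hlen' (j - (2 * M + 1)) (by omega)
          rw [hgd] at hi2
          refine ⟨i + 1, by omega, ?_, ?_, ?_, ?_⟩ <;>
            simp only [Nat.add_sub_cancel, if_neg (Nat.succ_ne_zero i), hi1, if_pos] <;>
            omega
      · have hgd : s'.getD k' 0 = s.getD k' 0 := by
          rw [hs']; exact getD_set_ne' s k k' _ (fun h => hkk h.symm)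
        obtain ⟨i, hiM, hi1, hi2, hi3, hi4⟩ := hg0 k' hlen' j (by omega)
        have hne : (g0 i).1 ≠ k := by rw [hi1]; exact hkk
        refine ⟨i + 1, by omega, ?_, ?_, ?_, ?_⟩ <;>
          simp only [Nat.add_sub_cancel, if_neg (Nat.succ_ne_zero i), if_neg hne] <;>
          first
            | exact hi1
            | (rw [← hgd]; omega)
            | omega


/-- a walk from inside `S` to outside `S` uses an edge leaving `S`. -/
lemma exists_crossing_edge {V : Type*} (G : SimpleGraph V) (S : Set V) :
    ∀ {u v : V} (_ : G.Walk u v), u ∈ S → v ∉ S →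
      ∃ x ∈ S, ∃ y, y ∉ S ∧ G.Adj x y := by
  intro u v w
  induction w with
  | nil => intro h h'; exact absurd h h'
  | @cons a b c hadj w ihw =>
    intro ha hc
    by_cases hb : b ∈ S
    · exact ihw hb hc
    · exact ⟨a, ha, b, hb, hadj⟩

/-- along a `Chain' G.Adj` list there are walks of controlled length. -/
lemma chain_walk {V : Type*} (G : SimpleGraph V) (l : List V) (hc : l.Chain' G.Adj) :
    ∀ (d a : ℕ) (h : a + d < l.length),
      ∃ w : G.Walk (l[a]'(by omega)) (l[a + d]'h), w.length = d := by
  intro d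
  induction d with
  | zero => intro a h; exact ⟨SimpleGraph.Walk.nil, rfl⟩
  | succ d ihd =>
    intro a h
    have hadj : G.Adj (l[a]'(by omega)) (l[a + 1]'(by omega)) := by
      have := List.isChain_iff_getElem.mp hc a (by omega)
      simpa [List.get_eq_getElem] using this
    obtain ⟨w, hw⟩ := ihd (a + 1) (by omega)
    have hv : (l[a + 1 + d]'(by omega)) = (l[a + (d + 1)]'h) := by congr 1; omega
    refine ⟨(SimpleGraph.Walk.cons hadj w).copy rfl hv, ?_⟩
    simp [hw]

lemma chain_dist {V : Type*} (G : SimpleGraph V) (l : List V) (hc : l.Chain' G.Adj)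
    (p j : ℕ) (hp : p < l.length) (hj : j < l.length) :
    G.Reachable (l[p]'hp) (l[j]'hj) ∧
      G.dist (l[p]'hp) (l[j]'hj) ≤ max p j - min p j := by
  rcases le_total p j with h | h
  · obtain ⟨w, hw⟩ := chain_walk G l hc (j - p) p (by omega)
    have hv : (l[p + (j - p)]'(by omega)) = (l[j]'hj) := by congr 1; omega
    exact ⟨(w.copy rfl hv).reachable,
      le_trans (SimpleGraph.dist_le (w.copy rfl hv)) (by simp [hw]; omega)⟩
  · obtain ⟨w, hw⟩ := chain_walk G l hc (p - j) j (by omega)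
    have hv : (l[j + (p - j)]'(by omega)) = (l[p]'hp) := by congr 1; omega
    exact ⟨(w.copy rfl hv).reverse.reachable,
      le_trans (SimpleGraph.dist_le (w.copy rfl hv).reverse) (by simp [hw]; omega)⟩

lemma exists_hamList {V : Type*} [Finite V] (G : SimpleGraph V)
    (hdeg : ∀ v : V, Nat.card (G.neighborSet v) ≤ 2) (c : G.ConnectedComponent) :
    ∃ l : List V, l.Nodup ∧ l.Chain' G.Adj ∧
      ∀ v, v ∈ l ↔ G.connectedComponentMk v = c := by
  classical
  have : Fintype V := Fintype.ofFinite V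
  obtain ⟨v0, hv0⟩ := Quot.exists_rep c
  have hv0' : G.connectedComponentMk v0 = c := hv0
  set S : Set ℕ := {L | ∃ l : List V, l.Nodup ∧ l.Chain' G.Adj ∧
      (∀ v ∈ l, G.connectedComponentMk v = c) ∧ l.length = L} with hS
  have h1S : (1 : ℕ) ∈ S := ⟨[v0], by simp, List.isChain_singleton v0, by simpa using hv0', rfl⟩
  have hbdd : BddAbove S := ⟨Fintype.card V, fun L hL => by
    obtain ⟨l, hnd, _, _, hlen⟩ := hL
    exact hlen ▸ hnd.length_le_card⟩
  obtain ⟨l, hnd, hch, hmemc, hlen⟩ := Nat.sSup_mem ⟨1, h1S⟩ hbdd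
  have hmaxlen : ∀ l' : List V, l'.Nodup → l'.Chain' G.Adj →
      (∀ v ∈ l', G.connectedComponentMk v = c) → l'.length ≤ l.length := by
    intro l' hnd' hch' hmem'
    exact hlen ▸ le_csSup hbdd ⟨l', hnd', hch', hmem', rfl⟩
  have hlpos : 0 < l.length := by
    have := hlen ▸ le_csSup hbdd h1S
    omega
  refine ⟨l, hnd, hch, fun v => ⟨fun hv => hmemc v hv, fun hv => ?_⟩⟩
  by_contra hvl
  -- a walk from the head of `l` to `v`, which lies outside `l`
  have hlne : l ≠ [] := List.length_pos_iff.mp hlpos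
  have hhead : l.head hlne ∈ l := List.head_mem hlne
  have hreach : G.Reachable (l.head hlne) v :=
    SimpleGraph.ConnectedComponent.exact (by rw [hmemc _ hhead, hv])
  obtain ⟨w⟩ := hreach
  obtain ⟨x, hxl, y, hyl, hxy⟩ :=
    exists_crossing_edge G {z | z ∈ l} w hhead hvl
  have hxl' : x ∈ l := hxl
  have hyl' : y ∉ l := hyl
  obtain ⟨i, hi, hxi⟩ := List.mem_iff_getElem.mp hxl'
  have hyc : G.connectedComponentMk y = c := by
    rw [← SimpleGraph.ConnectedComponent.connectedComponentMk_eq_of_adj hxy]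
    exact hmemc x hxl'
  by_cases hi0 : i = 0
  · -- x is the head; prepend y
    have hx0 : l[0]'(by omega) = x := by subst hi0; exact hxi
    have hch' : (y :: l).Chain' G.Adj := by
      refine List.isChain_cons.mpr ⟨?_, hch⟩
      intro z hz
      have hz' : l.head? = some (l[0]'(by omega)) := by
        rw [List.head?_eq_getElem?, List.getElem?_eq_getElem]
      rw [hz'] at hz
      simp only [Option.mem_some_iff] at hz
      rw [← hz, hx0]
      exact hxy.symm
    have hnd' : (y :: l).Nodup := List.nodup_cons.mpr ⟨hyl', hnd⟩
    have hmem' : ∀ u ∈ y :: l, G.connectedComponentMk u = c := by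
      intro u hu
      rcases List.mem_cons.mp hu with rfl | hu
      · exact hyc
      · exact hmemc u hu
    have := hmaxlen (y :: l) hnd' hch' hmem'
    simp at this
  · by_cases hil : i = l.length - 1
    · -- x is the last element; append y
      have hxlast : l.getLast hlne = x := by
        rw [List.getLast_eq_getElem]
        subst hil; exact hxi
      have hch' : (l ++ [y]).Chain' G.Adj := by
        refine List.isChain_append.mpr ⟨hch, List.isChain_singleton y, ?_⟩
        intro a ha b hb
        rw [List.getLast?_eq_getLast hlne] at ha
        simp only [List.head?_cons, Option.mem_some_iff] at ha hb
        rw [← ha, ← hb, hxlast]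
        exact hxy
      have hnd' : (l ++ [y]).Nodup := by
        rw [List.nodup_append]
        exact ⟨hnd, List.nodup_singleton y, fun a ha b hb => by
          simp at hb; subst hb; exact fun h => hyl' (h ▸ ha)⟩
      have hmem' : ∀ u ∈ l ++ [y], G.connectedComponentMk u = c := by
        intro u hu
        rcases List.mem_append.mp hu with hu | hu
        · exact hmemc u hu
        · simp at hu; subst hu; exact hyc
      have := hmaxlen (l ++ [y]) hnd' hch' hmem'
      simp at this
    · -- x is internal: it would have three distinct neighbours
      have hi1 : 0 < i := by omega
      have hi2 : i + 1 < l.length := by omega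
      have adj1 : G.Adj (l[i - 1]'(by omega)) (l[i]'hi) := by
        have h := List.isChain_iff_getElem.mp hch (i - 1) (by omega)
        have e : (l[i - 1 + 1]'(by omega)) = l[i]'hi := by congr 1; omega
        rwa [e] at h
      have adj2 : G.Adj (l[i]'hi) (l[i + 1]'hi2) := by
        have h := List.isChain_iff_getElem.mp hch i (by omega)
        simpa only [List.get_eq_getElem] using h
      have hne12 : (l[i - 1]'(by omega)) ≠ (l[i + 1]'hi2) := by
        intro h
        have := (List.Nodup.getElem_inj_iff hnd).mp h
        omega
      have hney1 : (l[i - 1]'(by omega)) ≠ y := fun h => hyl' (h ▸ List.getElem_mem _)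
      have hney2 : (l[i + 1]'hi2) ≠ y := fun h => hyl' (h ▸ List.getElem_mem _)
      have hsub : ({l[i - 1]'(by omega), l[i + 1]'hi2, y} : Set V) ⊆ G.neighborSet x := by
        intro z hz
        rcases hz with rfl | rfl | rfl
        · exact hxi ▸ adj1.symm
        · exact hxi ▸ adj2
        · exact hxy
      have h3 : ({l[i - 1]'(by omega), l[i + 1]'hi2, y} : Set V).ncard = 3 := by
        rw [Set.ncard_insert_of_notMem (by simp [hne12, hney1]),
          Set.ncard_insert_of_notMem (by simp [hney2]), Set.ncard_singleton]
      have hle : 3 ≤ (G.neighborSet x).ncard := by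
        rw [← h3]
        exact Set.ncard_le_ncard hsub (Set.toFinite _)
      have := hdeg x
      rw [Nat.card_coe_set_eq] at this
      omega

/-- If `G` is a path-forest of order `n` with `t ≥ 1` components, then
`b(G) ≤ ⌊n / (2t)⌋ + t`. -/

theorem pathForest_burningNumber_le {V : Type*} [Finite V] [Nonempty V]
    (G : SimpleGraph V) (hG : G.IsPathForest) :
    G.burningNumber ≤
      Nat.card V / (2 * Nat.card G.ConnectedComponent) + Nat.card G.ConnectedComponent := by
  classical
  have hfV : Fintype V := Fintype.ofFinite V
  have hfC : Fintype G.ConnectedComponent := Fintype.ofFinite _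
  set t := Nat.card G.ConnectedComponent with htdef
  set n := Nat.card V with hndef
  obtain ⟨q, hq⟩ : ∃ q, n / (2 * t) = q := ⟨_, rfl⟩
  rw [hq]
  set M := q + t with hMdef
  have hNEC : Nonempty G.ConnectedComponent :=
    ⟨G.connectedComponentMk (Classical.arbitrary V)⟩
  have ht1 : 1 ≤ t := Nat.card_pos
  choose l hnd hch hmem using fun c => exists_hamList G hG.2 c
  set cs := (Finset.univ : Finset G.ConnectedComponent).toList with hcs
  have hcs_mem : ∀ c, c ∈ cs := fun c => by simp [hcs]
  have hcs_len : cs.length = t := by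
    rw [hcs, Finset.length_toList, htdef, Nat.card_eq_fintype_card]
    rfl
  set s := cs.map (fun c => (l c).length) with hsdef
  have hs_len : s.length = t := by rw [hsdef, List.length_map, hcs_len]
  have hlne : ∀ c, l c ≠ [] := by
    intro c h
    obtain ⟨v, hv⟩ := Quot.exists_rep c
    have : v ∈ l c := (hmem c v).mpr hv
    simp [h] at this
  have hcount : s.countP (fun x => x ≠ 0) = t := by
    rw [← hs_len]
    apply List.countP_eq_length.mpr
    intro a ha
    obtain ⟨c, _, rfl⟩ := List.mem_map.mp ha
    simpa using hlne c
  have hsum : s.sum = n := by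
    have h1 : s.sum = ∑ c ∈ Finset.univ, (l c).length := by
      rw [hsdef, hcs, Finset.sum_map_toList]
    have h2 : Fintype.card V = ∑ c ∈ Finset.univ,
        (Finset.univ.filter fun v => G.connectedComponentMk v = c).card :=
      Finset.card_eq_sum_card_fiberwise (fun v _ => Finset.mem_univ _)
    have h3 : ∀ c : G.ConnectedComponent,
        (Finset.univ.filter fun v => G.connectedComponentMk v = c).card = (l c).length := by
      intro c
      rw [← List.toFinset_card_of_nodup (hnd c)]
      congr 1
      ext v
      simp [hmem c v]
    rw [h1, hndef, Nat.card_eq_fintype_card, h2]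
    exact (Finset.sum_congr rfl fun c _ => (h3 c)).symm
  have hB1 : s.countP (fun x => x ≠ 0) ≤ M := by rw [hcount]; omega
  have hB2 : s.sum ≤ 2 * s.countP (fun x => x ≠ 0) * (M - s.countP (fun x => x ≠ 0))
      + 2 * s.countP (fun x => x ≠ 0) - 1 := by
    rw [hcount, hsum]
    have e : M - t = q := by omega
    rw [e]
    have hdm := Nat.div_add_mod n (2 * t)
    obtain ⟨r, hr⟩ : ∃ r, n % (2 * t) = r := ⟨_, rfl⟩
    have hmod : r < 2 * t := hr ▸ Nat.mod_lt _ (by omega)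
    rw [hq, hr] at hdm
    omega
  obtain ⟨g, hg⟩ := lemB M s hB1 hB2
  obtain ⟨v0⟩ := ‹Nonempty V›
  set c0 := G.connectedComponentMk v0 with hc0
  apply Nat.sInf_le
  refine ⟨fun i => (l (cs.getD (g i).1 c0)).getD (g i).2 v0, ?_⟩
  intro u
  set c := G.connectedComponentMk u with hcdef
  have hcu : c ∈ cs := hcs_mem c
  set kk := cs.idxOf c with hkkdef
  have hkl : kk < cs.length := List.idxOf_lt_length_iff.mpr hcu
  have hcsk : cs[kk]'hkl = c := List.getElem_idxOf hkl
  have hu_mem : u ∈ l c := (hmem c u).mpr hcdef.symm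
  set jj := (l c).idxOf u with hjjdef
  have hjl : jj < (l c).length := List.idxOf_lt_length_iff.mpr hu_mem
  have hgetj : (l c)[jj]'hjl = u := List.getElem_idxOf hjl
  have hkls : kk < s.length := by rw [hs_len, ← hcs_len]; exact hkl
  have hsk : s.getD kk 0 = (l c).length := by
    rw [List.getD_eq_getElem s 0 hkls]
    have e : s[kk]'hkls = (l (cs[kk]'hkl)).length := List.getElem_map _
    rw [e, hcsk]
  obtain ⟨i, hiM, hg1, hg2, hg3, hg4⟩ := hg kk hkls jj (by rw [hsk]; exact hjl)
  have hg2' : (g i).2 < (l c).length := by rw [← hsk]; exact hg2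
  have hf : (l (cs.getD (g i).1 c0)).getD (g i).2 v0 = (l c)[(g i).2]'hg2' := by
    have e1 : cs.getD (g i).1 c0 = c := by
      rw [hg1, List.getD_eq_getElem cs c0 hkl, hcsk]
    rw [e1, List.getD_eq_getElem (l c) v0 hg2']
  refine ⟨⟨i, hiM⟩, ?_⟩
  show u ∈ G.nball ((l (cs.getD (g i).1 c0)).getD (g i).2 v0) (M - 1 - i)
  rw [hf]
  obtain ⟨hreach, hdist⟩ := chain_dist G (l c) (hch c) ((g i).2) jj hg2' hjl
  exact ⟨hgetj ▸ hreach, le_trans (hgetj ▸ hdist) (by omega)⟩
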